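/- Let F = ℚ(x₁,…,xₙ) be the field of rational functions in n indeterminates over ℚ. Suppose y₁,…,yₙ ∈ F are algebraically independent over ℚ and generate F as a field extension of ℚ. Let B be an n×n skew-symmetric integer matrix and k an index. Then the mutated tuple μ_k(y)₁,…,μ_k(y)ₙ is again algebraically independent over ℚ and generates F as a field extension of ℚ; that is, the mutation of a seed is again a seed. -/

import Mathlib

/-- Fomin–Zelevinsky mutation of a cluster `y` at index `k` (exchange relation). -/
noncomputable def clusterMutation {n : ℕ} {F : Type*} [Field F]
    (y : Fin n → F) (B : Matrix (Fin n) (Fin n) ℤ) (k : Fin n) : Fin n → F :=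
  fun i =>
    if i = k then
      ((∏ j, y j ^ (max (B j k) 0).toNat) + (∏ j, y j ^ (max (-B j k) 0).toNat)) / y k
    else y i

/-- If `u` is transcendental over a subalgebra `A` of a field `F`, `f` is a nonzero
element of `A`, and `u * v = f`, then `v` is transcendental over `A` as well. -/
lemma transcendental_of_mul_eq {K F : Type*} [Field K] [Field F] [Algebra K F]
    (A : Subalgebra K F) {u v : F} (f : A)
    (hf0 : (f : F) ≠ 0) (hu : u ≠ 0) (huv : u * v = f)
    (ht : Transcendental A u) : Transcendental A v := by
  rintro ⟨p, hp, hpv⟩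
  apply ht
  set d := p.natDegree with hd
  refine ⟨∑ i ∈ Finset.range (d+1),
      Polynomial.C (p.coeff (d - i) * f ^ (d - i)) * Polynomial.X ^ i, ?_, ?_⟩
  · intro h
    have hc : (∑ i ∈ Finset.range (d+1),
        Polynomial.C (p.coeff (d - i) * f ^ (d - i)) * Polynomial.X ^ i).coeff 0
          = p.coeff d * f ^ d := by
      rw [Polynomial.finset_sum_coeff, Finset.sum_eq_single 0]
      · rw [pow_zero, mul_one, Nat.sub_zero, Polynomial.coeff_C_zero]
      · intro b _ hb
        simp [Polynomial.coeff_C_mul, Polynomial.coeff_X_pow, Ne.symm hb]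
      · intro h0
        exact absurd (Finset.mem_range.mpr (Nat.succ_pos d)) h0
    rw [h, Polynomial.coeff_zero] at hc
    have hcF := congrArg (algebraMap A F) hc.symm
    simp only [map_mul, map_pow, map_zero] at hcF
    have hlc : p.coeff d ≠ 0 := Polynomial.leadingCoeff_ne_zero.mpr hp
    have h1 : algebraMap A F (p.coeff d) ≠ 0 := fun hh => hlc (Subtype.ext hh)
    have h2 : (algebraMap A F f) ^ d ≠ 0 := pow_ne_zero _ hf0
    exact (mul_ne_zero h1 h2) hcF
  · have main : (Polynomial.aeval u) (∑ i ∈ Finset.range (d+1),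
        Polynomial.C (p.coeff (d - i) * f ^ (d - i)) * Polynomial.X ^ i)
        = ∑ i ∈ Finset.range (d+1), (algebraMap A F (p.coeff i) * v ^ i) * u ^ d := by
      rw [map_sum]
      refine Finset.sum_nbij' (fun i => d - i) (fun i => d - i) ?_ ?_ ?_ ?_ ?_
      · intro a ha; simp only [Finset.mem_range] at *; omega
      · intro a ha; simp only [Finset.mem_range] at *; omega
      · intro a ha; simp only [Finset.mem_range] at ha; omega
      · intro a ha; simp only [Finset.mem_range] at ha; omega
      · intro a ha
        simp only [Finset.mem_range] at ha
        have ha' : a ≤ d := Nat.lt_succ_iff.mp ha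
        have h2 : d - (d - a) = a := by omega
        simp only [map_mul, Polynomial.aeval_C, map_pow, Polynomial.aeval_X, h2]
        have hfuv : algebraMap A F f = u * v := huv.symm
        rw [hfuv, mul_pow]
        have hup : u ^ (d - a) * u ^ a = u ^ d := by
          rw [← pow_add]; congr 1; omega
        calc algebraMap A F (p.coeff (d - a)) * (u ^ (d - a) * v ^ (d - a)) * u ^ a
            = algebraMap A F (p.coeff (d - a)) * v ^ (d - a) * (u ^ (d - a) * u ^ a) := by
              ring
          _ = algebraMap A F (p.coeff (d - a)) * v ^ (d - a) * u ^ d := by rw [hup]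
    rw [main, ← Finset.sum_mul]
    have hs : ∑ i ∈ Finset.range (d+1), algebraMap A F (p.coeff i) * v ^ i = 0 := by
      have h := Polynomial.aeval_eq_sum_range (p := p) v
      rw [hpv] at h
      simp only [Algebra.smul_def] at h
      exact h.symm
    rw [hs, zero_mul]

/-- The mutation of a seed in `ℚ(x₁,…,xₙ)` is again a seed: the mutated cluster is
algebraically independent over `ℚ` and generates the field of rational functions. -/
theorem clusterMutation_isSeed {n : ℕ}
    (y : Fin n → FractionRing (MvPolynomial (Fin n) ℚ))
    (hind : AlgebraicIndependent ℚ y)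
    (hgen : IntermediateField.adjoin ℚ (Set.range y) = ⊤)
    (B : Matrix (Fin n) (Fin n) ℤ) (hB : ∀ i j, B j i = -B i j) (k : Fin n) :
    AlgebraicIndependent ℚ (clusterMutation y B k) ∧
      IntermediateField.adjoin ℚ (Set.range (clusterMutation y B k)) = ⊤ := by
  classical
  have hBkk : B k k = 0 := by have := hB k k; omega
  set y' := clusterMutation y B k with hy'
  set e₁ : Fin n → ℕ := fun j => (max (B j k) 0).toNat with he₁
  set e₂ : Fin n → ℕ := fun j => (max (-B j k) 0).toNat with he₂
  have he₁k : e₁ k = 0 := by simp [he₁, hBkk]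
  have he₂k : e₂ k = 0 := by simp [he₂, hBkk]
  set m₁ := ∏ j, y j ^ e₁ j with hm₁
  set m₂ := ∏ j, y j ^ e₂ j with hm₂
  -- the aeval map is injective
  have hinj := algebraicIndependent_iff_injective_aeval.mp hind
  -- products of X's are monomials
  have hprodX : ∀ s : Fin n →₀ ℕ,
      (∏ j, (MvPolynomial.X j : MvPolynomial (Fin n) ℚ) ^ s j)
        = MvPolynomial.monomial s 1 := by
    intro s
    rw [← MvPolynomial.prod_X_pow_eq_monomial]
    exact (Finset.prod_subset (Finset.subset_univ _) fun x _ hx => by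
      rw [Finsupp.notMem_support_iff.mp hx, pow_zero]).symm
  -- f := m₁ + m₂ is nonzero
  have hf0 : m₁ + m₂ ≠ 0 := by
    intro h
    set s₁ : Fin n →₀ ℕ := Finsupp.equivFunOnFinite.symm e₁ with hs₁
    set s₂ : Fin n →₀ ℕ := Finsupp.equivFunOnFinite.symm e₂ with hs₂
    set P : MvPolynomial (Fin n) ℚ :=
      (∏ j, MvPolynomial.X j ^ s₁ j) + (∏ j, MvPolynomial.X j ^ s₂ j) with hP
    have haev : (MvPolynomial.aeval y) P = m₁ + m₂ := by
      simp only [hP, map_add, map_prod, map_pow, MvPolynomial.aeval_X]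
      rfl
    have hP0 : P = 0 := by
      apply hinj
      rw [haev, h, map_zero]
    have hc := congrArg (MvPolynomial.coeff s₁) hP0
    rw [hP, hprodX, hprodX] at hc
    simp only [MvPolynomial.coeff_add, MvPolynomial.coeff_monomial,
      MvPolynomial.coeff_zero] at hc
    split_ifs at hc <;> norm_num at hc
  -- nonvanishing of the y j
  have hy0 : ∀ j, y j ≠ 0 := by
    intro j h
    have : (MvPolynomial.X j : MvPolynomial (Fin n) ℚ) = 0 := by
      apply hinj; simp [h]
    exact MvPolynomial.X_ne_zero j this
  -- basic facts about y'
  have hy'k : y' k = (m₁ + m₂) / y k := by simp [hy', clusterMutation, hm₁, hm₂, he₁, he₂]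
  have hy'ne : ∀ i, i ≠ k → y' i = y i := by
    intro i hi; simp [hy', clusterMutation, hi]
  have huv : y k * y' k = m₁ + m₂ := by
    rw [hy'k, mul_div_cancel₀ _ (hy0 k)]
  have hy'k0 : y' k ≠ 0 := by
    intro h; apply hf0; rw [← huv, h, mul_zero]
  -- the subfamily z
  set z : {j : Fin n // j ≠ k} → FractionRing (MvPolynomial (Fin n) ℚ) :=
    fun j => y j with hzdef
  have hz : AlgebraicIndependent ℚ z := hind.comp Subtype.val Subtype.val_injective
  set A := Algebra.adjoin ℚ (Set.range z) with hA
  have hmemA : ∀ E : Fin n → ℕ, E k = 0 → (∏ j, y j ^ E j) ∈ A := by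
    intro E hE
    refine Subalgebra.prod_mem _ fun j _ => ?_
    by_cases hj : j = k
    · subst hj; rw [hE, pow_zero]; exact Subalgebra.one_mem _
    · exact Subalgebra.pow_mem _ (Algebra.subset_adjoin (show y j ∈ Set.range z from ⟨⟨j, hj⟩, rfl⟩)) _
  have hfA : m₁ + m₂ ∈ A := add_mem (hmemA e₁ he₁k) (hmemA e₂ he₂k)
  -- transcendence of y k over A
  have hyk_trans : Transcendental A (y k) := by
    rw [← hz.option_iff_transcendental]
    have heq : (fun o : Option {j : Fin n // j ≠ k} => o.elim (y k) z)
        = y ∘ (Equiv.optionSubtypeNe k) := by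
      funext o; cases o with
      | none => rfl
      | some j => rfl
    rw [heq]
    exact hind.comp _ (Equiv.optionSubtypeNe k).injective
  -- transcendence of y' k over A
  have hy'k_trans : Transcendental A (y' k) := by
    refine transcendental_of_mul_eq A ⟨m₁ + m₂, hfA⟩ hf0 (hy0 k) huv hyk_trans
  constructor
  · -- algebraic independence
    have hopt : AlgebraicIndependent ℚ
        (fun o : Option {j : Fin n // j ≠ k} => o.elim (y' k) z) :=
      (hz.option_iff_transcendental _).2 hy'k_trans
    have heq : y' = (fun o : Option {j : Fin n // j ≠ k} => o.elim (y' k) z)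
        ∘ (Equiv.optionSubtypeNe k).symm := by
      funext i
      by_cases hi : i = k
      · subst hi
        simp [Equiv.optionSubtypeNe_symm_self]
      · rw [Function.comp_apply, Equiv.optionSubtypeNe_symm_of_ne hi]
        exact hy'ne i hi
    rw [heq]
    exact hopt.comp _ (Equiv.optionSubtypeNe k).symm.injective
  · -- generation
    set K := IntermediateField.adjoin ℚ (Set.range y') with hK
    have hmemK : ∀ E : Fin n → ℕ, E k = 0 → (∏ j, y j ^ E j) ∈ K := by
      intro E hE
      refine prod_mem fun j _ => ?_
      by_cases hj : j = k
      · subst hj; rw [hE, pow_zero]; exact one_mem _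
      · refine pow_mem ?_ _
        rw [← hy'ne j hj]
        exact IntermediateField.subset_adjoin ℚ _ ⟨j, rfl⟩
    have hr : Set.range y ⊆ (K : Set (FractionRing (MvPolynomial (Fin n) ℚ))) := by
      rintro _ ⟨i, rfl⟩
      by_cases hi : i = k
      · subst hi
        have h1 : y' i ∈ K := IntermediateField.subset_adjoin ℚ _ ⟨i, rfl⟩
        have h2 : m₁ + m₂ ∈ K := add_mem (hmemK e₁ he₁k) (hmemK e₂ he₂k)
        have hyi : y i = (m₁ + m₂) / y' i := by
          rw [eq_div_iff hy'k0, huv]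
        rw [hyi]
        exact div_mem h2 h1
      · rw [← hy'ne i hi]
        exact IntermediateField.subset_adjoin ℚ _ ⟨i, rfl⟩
    have hle : IntermediateField.adjoin ℚ (Set.range y) ≤ K :=
      IntermediateField.adjoin_le_iff.mpr hr
    rw [hgen] at hle
    exact le_antisymm le_top hle
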